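/- For every m ≥ 1, the matrix A_m over F2 indexed by functions Fin m → Fin 4 is symmetric, has zero diagonal, has pairwise distinct rows (the row map i ↦ A_m i is injective), and has rank over F2 equal to 2m. -/

import Mathlib

/-- The adjacency matrix of a triangle together with an isolated vertex, over `F2`. -/
def A1 : Matrix (Fin 4) (Fin 4) (ZMod 2) :=
  !![0,1,1,0; 1,0,1,0; 1,1,0,0; 0,0,0,0]

/-- The adjacency matrix of the `m`-fold parity product of the triangle-plus-isolated-vertex
graph, indexed by functions `Fin m → Fin 4`. -/
def Am (m : ℕ) : Matrix (Fin m → Fin 4) (Fin m → Fin 4) (ZMod 2) :=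
  Matrix.of fun x y => ∑ i : Fin m, A1 (x i) (y i)

namespace Stmt6Aux

open Matrix

def phi : Fin 4 → Fin 2 → ZMod 2 := ![![0,1],![1,0],![1,1],![0,0]]

def c : Fin 2 → Fin 4 := ![1, 0]

lemma A1_eq : ∀ a b : Fin 4, A1 a b = phi a 0 * phi b 1 + phi a 1 * phi b 0 := by
  intro a b; fin_cases a <;> fin_cases b <;> decide
lemma A1_symm : ∀ a b : Fin 4, A1 a b = A1 b a := by
  intro a b; fin_cases a <;> fin_cases b <;> decide
lemma A1_diag : ∀ a : Fin 4, A1 a a = 0 := by decide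
lemma A1_three : ∀ a : Fin 4, A1 a 3 = 0 := by decide
lemma col_inj : ∀ a b : Fin 4, A1 a 0 = A1 b 0 → A1 a 1 = A1 b 1 → a = b := by decide
lemma hAcc : ∀ j j' : Fin 2, A1 (c j) (c j') = if j' = j + 1 then 1 else 0 := by decide
lemma hA3c : ∀ j : Fin 2, A1 3 (c j) = 0 := by decide
lemma fin2_add : ∀ j : Fin 2, j + 1 + 1 = j := by decide
lemma c_zero : c 0 = 1 := rfl
lemma c_one : c 1 = 0 := rfl

variable (m : ℕ)

/-- selection of special rows -/
def e (u : Fin m × Fin 2) : Fin m → Fin 4 := fun k => if k = u.1 then c u.2 else 3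

lemma row_e (x : Fin m → Fin 4) (u : Fin m × Fin 2) :
    Am m x (e m u) = A1 (x u.1) (c u.2) := by
  show (∑ i : Fin m, A1 (x i) (e m u i)) = _
  rw [Finset.sum_eq_single u.1]
  · simp [e]
  · intro k _ hk
    simp only [e, if_neg hk]
    exact A1_three _
  · simp

def L : Matrix (Fin m × Fin 2) (Fin m → Fin 4) (ZMod 2) :=
  Matrix.of fun u x => if x = e m u then 1 else 0

lemma K_apply (u v : Fin m × Fin 2) :
    (L m * Am m * (L m)ᵀ) u v = if v = (u.1, u.2 + 1) then 1 else 0 := by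
  have h1 : (L m * Am m * (L m)ᵀ) u v = Am m (e m u) (e m v) := by
    simp [Matrix.mul_apply, L, Matrix.transpose_apply, ite_mul, mul_ite,
      zero_mul, one_mul, mul_zero, mul_one, Finset.sum_ite_eq', Finset.sum_ite_eq]
  rw [h1, row_e]
  show A1 (if v.1 = u.1 then c u.2 else 3) (c v.2) = _
  by_cases h : v.1 = u.1
  · rw [if_pos h, hAcc]
    by_cases h2 : v.2 = u.2 + 1
    · rw [if_pos h2, if_pos (by rw [Prod.ext_iff]; exact ⟨h, h2⟩)]
    · rw [if_neg h2, if_neg (by rw [Prod.ext_iff]; exact fun hc => h2 hc.2)]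
  · rw [if_neg h, hA3c, if_neg (by rw [Prod.ext_iff]; exact fun hc => h hc.1)]

lemma K_mul_K : (L m * Am m * (L m)ᵀ) * (L m * Am m * (L m)ᵀ) = 1 := by
  ext u w
  rw [Matrix.mul_apply]
  simp only [K_apply]
  rw [Finset.sum_eq_single (u.1, u.2 + 1)]
  · simp [Matrix.one_apply, fin2_add, Prod.ext_iff, eq_comm]
  · intro v _ hv
    rw [if_neg hv, zero_mul]
  · simp

def P : Matrix (Fin m → Fin 4) (Fin m × Fin 2) (ZMod 2) :=
  Matrix.of fun x u => phi (x u.1) u.2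

def N : Matrix (Fin m × Fin 2) (Fin m → Fin 4) (ZMod 2) :=
  Matrix.of fun u y => phi (y u.1) (u.2 + 1)

lemma Am_factor : Am m = P m * N m := by
  ext x y
  rw [Matrix.mul_apply]
  show (∑ i : Fin m, A1 (x i) (y i)) = _
  rw [Fintype.sum_prod_type]
  refine Finset.sum_congr rfl fun i _ => ?_
  rw [Fin.sum_univ_two]
  show A1 (x i) (y i) = phi (x i) 0 * phi (y i) (0 + 1) + phi (x i) 1 * phi (y i) (1 + 1)
  rw [A1_eq, show (0+1 : Fin 2) = 1 from rfl, show (1+1 : Fin 2) = 0 from rfl]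

lemma card2m : Fintype.card (Fin m × Fin 2) = 2 * m := by
  simp [Fintype.card_prod, mul_comm]

end Stmt6Aux

open Stmt6Aux Matrix in
/-- For every `m ≥ 1`, the matrix `A_m` is symmetric, has zero diagonal, has pairwise distinct
rows, and has `F2`-rank `2 * m`. -/
theorem stmt_6 (m : ℕ) (hm : 1 ≤ m) :
    (Am m).IsSymm ∧ (∀ x, Am m x x = 0) ∧
      Function.Injective (fun x => Am m x) ∧ (Am m).rank = 2 * m := by
  refine ⟨?_, ?_, ?_, ?_⟩
  · ext x y
    show (∑ i : Fin m, A1 (y i) (x i)) = ∑ i : Fin m, A1 (x i) (y i)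
    exact Finset.sum_congr rfl fun i _ => A1_symm _ _
  · intro x
    show (∑ i : Fin m, A1 (x i) (x i)) = 0
    simp [A1_diag]
  · intro x x' h
    funext i
    have h0 : Am m x (e m (i, 0)) = Am m x' (e m (i, 0)) := congrFun h _
    have h1 : Am m x (e m (i, 1)) = Am m x' (e m (i, 1)) := congrFun h _
    rw [row_e, row_e] at h0 h1
    simp only [c_zero, c_one] at h0 h1
    exact col_inj _ _ h1 h0
  · refine le_antisymm ?_ ?_
    · rw [Am_factor]
      calc (P m * N m).rank ≤ (P m).rank := Matrix.rank_mul_le_left _ _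
        _ ≤ Fintype.card (Fin m × Fin 2) := Matrix.rank_le_card_width _
        _ = 2 * m := card2m m
    · have hu : IsUnit (L m * Am m * (L m)ᵀ) :=
        @isUnit_of_invertible _ _ _ (invertibleOfRightInverse _ _ (K_mul_K m))
      have hr : (L m * Am m * (L m)ᵀ).rank = 2 * m := by
        rw [Matrix.rank_of_isUnit _ hu, card2m]
      calc (2 * m : ℕ) = (L m * Am m * (L m)ᵀ).rank := hr.symm
        _ ≤ (L m * Am m).rank := Matrix.rank_mul_le_left _ _
        _ ≤ (Am m).rank := Matrix.rank_mul_le_right _ _
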